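/- Let (Ω, 𝒜, μ) be a measure space, H a separable complex Hilbert space, and Λ : Ω → L(H) a map such that (i) ω ↦ ⟨ψ, Λ(ω)φ⟩ is measurable for all ψ, φ ∈ H, and (ii) ∫_B ‖Λ(ω)φ‖ dμ(ω) < ∞ for each φ ∈ H and each B ∈ 𝒜 with μ(B) < ∞. Then for each measurable function f : Ω → ℂ there exists a linear operator Γ_Λ(f) in H whose domain is D(Γ_Λ(f)) = {φ ∈ H : ω ↦ f(ω)⟨ψ, Λ(ω)φ⟩ is μ-integrable for each ψ ∈ H} and which satisfies ⟨ψ, Γ_Λ(f)φ⟩ = ∫ f(ω)⟨ψ, Λ(ω)φ⟩ dμ(ω) for all ψ ∈ H and φ ∈ D(Γ_Λ(f)). -/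

import Mathlib

open MeasureTheory Filter Topology

noncomputable section

local notation "⟪" x ", " y "⟫" => @inner ℂ _ _ x y

private lemma stmt6_conj_integrable {Ω : Type*} [MeasurableSpace Ω] {μ : Measure Ω}
    {g : Ω → ℂ} (hg : Integrable g μ) :
    Integrable (fun ω => (starRingEnd ℂ) (g ω)) μ := by
  have := (RCLike.conjCLE (K := ℂ)).toContinuousLinearMap.integrable_comp hg
  simpa using this

/-- Key step: Riesz representation for a fixed `φ` in the domain, using the closed
graph theorem to get boundedness of the relevant functional. -/
private lemma stmt6_key {Ω : Type*} [MeasurableSpace Ω] (μ : Measure Ω)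
    {H : Type*} [NormedAddCommGroup H] [InnerProductSpace ℂ H] [CompleteSpace H]
    (Λ : Ω → H →L[ℂ] H) (f : Ω → ℂ) (φ : H)
    (hφ : ∀ ψ : H, Integrable (fun ω => f ω * ⟪ψ, Λ ω φ⟫) μ) :
    ∃ v : H, ∀ ψ : H, ⟪ψ, v⟫ = ∫ ω, f ω * ⟪ψ, Λ ω φ⟫ ∂μ := by
  classical
  -- the conjugated integrand, which is ℂ-linear in `ψ`
  set g : H → Ω → ℂ := fun ψ ω => (starRingEnd ℂ) (f ω) * ⟪Λ ω φ, ψ⟫ with hgdef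
  have hg_eq : ∀ ψ ω, g ψ ω = (starRingEnd ℂ) (f ω * ⟪ψ, Λ ω φ⟫) := by
    intro ψ ω
    simp [hgdef, map_mul, inner_conj_symm]
  have hg : ∀ ψ : H, Integrable (g ψ) μ := by
    intro ψ
    have := stmt6_conj_integrable (hφ ψ)
    refine this.congr (Eventually.of_forall fun ω => ?_)
    rw [hg_eq]
  have hg_add : ∀ ψ₁ ψ₂ : H, g (ψ₁ + ψ₂) = g ψ₁ + g ψ₂ := by
    intro ψ₁ ψ₂
    funext ω
    simp [hgdef, inner_add_right, mul_add]
  have hg_smul : ∀ (c : ℂ) (ψ : H), g (c • ψ) = c • g ψ := by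
    intro c ψ
    funext ω
    simp [hgdef, inner_smul_right]
    ring
  -- the linear map into L¹
  let T : H →ₗ[ℂ] Lp ℂ 1 μ :=
    { toFun := fun ψ => (hg ψ).toL1 (g ψ)
      map_add' := by
        intro ψ₁ ψ₂
        have h1 : Integrable (g ψ₁ + g ψ₂) μ := (hg ψ₁).add (hg ψ₂)
        have h2 : (hg (ψ₁ + ψ₂)).toL1 (g (ψ₁ + ψ₂)) = h1.toL1 (g ψ₁ + g ψ₂) := by
          simp_rw [hg_add]
        show (hg (ψ₁ + ψ₂)).toL1 (g (ψ₁ + ψ₂)) =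
          (hg ψ₁).toL1 (g ψ₁) + (hg ψ₂).toL1 (g ψ₂)
        rw [h2, Integrable.toL1_add _ _ (hg ψ₁) (hg ψ₂)]
      map_smul' := by
        intro c ψ
        have h1 : Integrable (c • g ψ) μ := (hg ψ).smul c
        have h2 : (hg (c • ψ)).toL1 (g (c • ψ)) = h1.toL1 (c • g ψ) := by
          simp_rw [hg_smul]
        show (hg (c • ψ)).toL1 (g (c • ψ)) = (RingHom.id ℂ) c • (hg ψ).toL1 (g ψ)
        rw [h2]
        exact Integrable.toL1_smul (g ψ) (hg ψ) c }
  have hT_apply : ∀ ψ, T ψ = (hg ψ).toL1 (g ψ) := fun _ => rfl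
  -- `T` has sequentially closed graph, hence is continuous
  have hclosed : ∀ (u : ℕ → H) (x : H) (y : Lp ℂ 1 μ),
      Tendsto u atTop (𝓝 x) → Tendsto (T ∘ u) atTop (𝓝 y) → y = T x := by
    intro u x y hu hTu
    have hmeas : TendstoInMeasure μ (fun n => ((T ∘ u) n : Ω → ℂ)) atTop (y : Ω → ℂ) :=
      tendstoInMeasure_of_tendsto_Lp hTu
    obtain ⟨ns, hns, hae⟩ := hmeas.exists_seq_tendsto_ae
    -- a.e. identification of the L¹ representatives with `g (u n)`
    have hrep : ∀ᵐ ω ∂μ, ∀ n : ℕ, ((T ∘ u) n : Ω → ℂ) ω = g (u n) ω := by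
      rw [ae_all_iff]
      intro n
      exact (hg (u n)).coeFn_toL1
    have hTx : (T x : Ω → ℂ) =ᵐ[μ] g x := (hg x).coeFn_toL1
    refine (Lp.ext ?_).symm
    -- show `⇑(T x) =ᵐ[μ] ⇑y`
    filter_upwards [hrep, hTx, hae] with ω h1 h2 h3
    -- pointwise convergence of `g (u (ns i)) ω` to `g x ω`
    have hcont : Continuous fun ψ : H => g ψ ω := by
      exact
        (continuous_const.mul (continuous_const.inner continuous_id) :
          Continuous fun ψ : H => (starRingEnd ℂ) (f ω) * ⟪Λ ω φ, ψ⟫)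
    have husub : Tendsto (fun i => u (ns i)) atTop (𝓝 x) :=
      hu.comp hns.tendsto_atTop
    have hgx : Tendsto (fun i => g (u (ns i)) ω) atTop (𝓝 (g x ω)) :=
      (hcont.tendsto x).comp husub
    have h3' : Tendsto (fun i => g (u (ns i)) ω) atTop (𝓝 (y ω)) := by
      refine h3.congr fun i => ?_
      exact h1 (ns i)
    rw [h2]
    exact tendsto_nhds_unique hgx h3'
  have hTcont : Continuous T := T.continuous_of_seq_closed_graph hclosed
  let Tc : H →L[ℂ] Lp ℂ 1 μ := ⟨T, hTcont⟩
  -- the bounded linear functional `ψ ↦ ∫ g ψ`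
  let ℓlin : H →ₗ[ℂ] ℂ :=
    { toFun := fun ψ => ∫ ω, g ψ ω ∂μ
      map_add' := by
        intro ψ₁ ψ₂
        show (∫ ω, g (ψ₁ + ψ₂) ω ∂μ) = (∫ ω, g ψ₁ ω ∂μ) + ∫ ω, g ψ₂ ω ∂μ
        rw [hg_add]
        exact integral_add (hg ψ₁) (hg ψ₂)
      map_smul' := by
        intro c ψ
        show (∫ ω, g (c • ψ) ω ∂μ) = (RingHom.id ℂ) c • ∫ ω, g ψ ω ∂μ
        rw [hg_smul]
        simpa using integral_smul c (g ψ) }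
  have hbound : ∀ ψ : H, ‖ℓlin ψ‖ ≤ ‖Tc‖ * ‖ψ‖ := by
    intro ψ
    calc ‖ℓlin ψ‖ = ‖∫ ω, g ψ ω ∂μ‖ := rfl
      _ ≤ ∫ ω, ‖g ψ ω‖ ∂μ := norm_integral_le_integral_norm _
      _ = ‖(hg ψ).toL1 (g ψ)‖ := (L1.norm_of_fun_eq_integral_norm (hg ψ)).symm
      _ = ‖Tc ψ‖ := rfl
      _ ≤ ‖Tc‖ * ‖ψ‖ := Tc.le_opNorm ψ
  let ℓ : H →L[ℂ] ℂ := LinearMap.mkContinuous ℓlin ‖Tc‖ hbound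
  -- Riesz representation
  refine ⟨(InnerProductSpace.toDual ℂ H).symm ℓ, fun ψ => ?_⟩
  have h1 : ⟪(InnerProductSpace.toDual ℂ H).symm ℓ, ψ⟫ = ℓ ψ :=
    InnerProductSpace.toDual_symm_apply
  have h2 : ℓ ψ = (starRingEnd ℂ) (∫ ω, f ω * ⟪ψ, Λ ω φ⟫ ∂μ) := by
    show (∫ ω, g ψ ω ∂μ) = _
    rw [← integral_conj]
    exact integral_congr_ae (Eventually.of_forall fun ω => hg_eq ψ ω)
  calc ⟪ψ, (InnerProductSpace.toDual ℂ H).symm ℓ⟫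
      = (starRingEnd ℂ) ⟪(InnerProductSpace.toDual ℂ H).symm ℓ, ψ⟫ := (inner_conj_symm _ _).symm
    _ = (starRingEnd ℂ) (ℓ ψ) := by rw [h1]
    _ = ∫ ω, f ω * ⟪ψ, Λ ω φ⟫ ∂μ := by rw [h2, RCLike.conj_conj]

/-- Let `(Ω, 𝒜, μ)` be a measure space, `H` a separable complex Hilbert space
and `Λ : Ω → L(H)` a map such that (i) `ω ↦ ⟨ψ, Λ(ω)φ⟩` is measurable for all `ψ, φ`, and
(ii) `∫_B ‖Λ(ω)φ‖ dμ < ∞` for each `φ` and each `B` of finite measure. Then for each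
measurable `f : Ω → ℂ` there exists a linear operator `Γ_Λ(f)` with domain
`{φ | ω ↦ f(ω)⟨ψ, Λ(ω)φ⟩ is μ-integrable for each ψ}` satisfying
`⟨ψ, Γ_Λ(f)φ⟩ = ∫ f(ω)⟨ψ, Λ(ω)φ⟩ dμ(ω)`. -/
theorem stmt6 {Ω : Type*} [MeasurableSpace Ω] (μ : Measure Ω)
    {H : Type*} [NormedAddCommGroup H] [InnerProductSpace ℂ H] [CompleteSpace H]
    [TopologicalSpace.SeparableSpace H]
    (Λ : Ω → H →L[ℂ] H)
    (hmeas : ∀ ψ φ : H, Measurable fun ω => ⟪ψ, Λ ω φ⟫)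
    (hint : ∀ (φ : H) (B : Set Ω), MeasurableSet B → μ B < ⊤ →
      IntegrableOn (fun ω => ‖Λ ω φ‖) B μ)
    (f : Ω → ℂ) (hf : Measurable f) :
    ∃ D : Submodule ℂ H,
      (D : Set H) = {φ : H | ∀ ψ : H, Integrable (fun ω => f ω * ⟪ψ, Λ ω φ⟫) μ} ∧
      ∃ L : D →ₗ[ℂ] H, ∀ (φ : D) (ψ : H),
        ⟪ψ, L φ⟫ = ∫ ω, f ω * ⟪ψ, Λ ω (φ : H)⟫ ∂μ := by
  classical
  set D : Submodule ℂ H :=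
    { carrier := {φ : H | ∀ ψ : H, Integrable (fun ω => f ω * ⟪ψ, Λ ω φ⟫) μ}
      add_mem' := by
        intro φ₁ φ₂ h₁ h₂ ψ
        have : (fun ω => f ω * ⟪ψ, Λ ω (φ₁ + φ₂)⟫) =
            fun ω => f ω * ⟪ψ, Λ ω φ₁⟫ + f ω * ⟪ψ, Λ ω φ₂⟫ := by
          funext ω
          simp [inner_add_right, mul_add]
        rw [this]
        exact (h₁ ψ).add (h₂ ψ)
      zero_mem' := by
        intro ψ
        simpa using integrable_zero Ω ℂ μ
      smul_mem' := by
        intro c φ h ψ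
        have : (fun ω => f ω * ⟪ψ, Λ ω (c • φ)⟫) =
            fun ω => c * (f ω * ⟪ψ, Λ ω φ⟫) := by
          funext ω
          simp [inner_smul_right]
          ring
        rw [this]
        exact (h ψ).const_mul c } with hD
  refine ⟨D, rfl, ?_⟩
  have key : ∀ φ : D, ∃ v : H, ∀ ψ : H, ⟪ψ, v⟫ = ∫ ω, f ω * ⟪ψ, Λ ω (φ : H)⟫ ∂μ :=
    fun φ => stmt6_key μ Λ f (φ : H) φ.2
  choose v hv using key
  refine ⟨{ toFun := v
            map_add' := ?_
            map_smul' := ?_ }, fun φ ψ => hv φ ψ⟩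
  · intro φ₁ φ₂
    refine ext_inner_left ℂ fun ψ => ?_
    rw [hv, inner_add_right, hv, hv]
    have : (fun ω => f ω * ⟪ψ, Λ ω ((φ₁ : H) + (φ₂ : H))⟫) =
        fun ω => f ω * ⟪ψ, Λ ω (φ₁ : H)⟫ + f ω * ⟪ψ, Λ ω (φ₂ : H)⟫ := by
      funext ω
      simp [inner_add_right, mul_add]
    simp only [Submodule.coe_add]
    rw [this]
    exact integral_add (φ₁.2 ψ) (φ₂.2 ψ)
  · intro c φ
    refine ext_inner_left ℂ fun ψ => ?_
    rw [RingHom.id_apply, hv, inner_smul_right, hv]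
    have : (fun ω => f ω * ⟪ψ, Λ ω ((c • φ : D) : H)⟫) =
        fun ω => c * (f ω * ⟪ψ, Λ ω (φ : H)⟫) := by
      funext ω
      simp [inner_smul_right]
      ring
    rw [this]
    simpa using integral_smul c fun ω => f ω * ⟪ψ, Λ ω (φ : H)⟫
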